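/- Let A ∈ ℝ^{m×n}, b ∈ ℝⁿ with b_k > 0 for all k, c ∈ ℝⁿ, y ∈ ℝᵐ, and let λ ∈ ℝᵐ satisfy λ > 0 and A'λ > c componentwise. For p ∈ ℕ, p ≥ 1, define φ_p(λ;y) := ⟨λ,y⟩ + Σ_{k=1}^n [ ln Γ(1 + p·b_k)/p − b_k·ln( p·((A'λ)_k − c_k) ) ] − Σ_{k=1}^n ln((A'λ)_k − c_k)/p − Σ_{j=1}^m ln(λ_j)/p − ((m+n)/p)·ln p. Then: (i) for every such p, φ_p(λ;y) = ⟨λ,y⟩ + (1/p)·ln ∫_{ℝⁿ₊} e^{p(⟨c,x⟩ + Σ_k b_k ln x_k − ⟨λ, Ax⟩)} dx − Σ_{j=1}^m ln(p·λ_j)/p; and (ii) lim_{p→∞} φ_p(λ;y) = ⟨λ,y⟩ − Σ_{k=1}^n b_k·ln( ((A'λ)_k − c_k) / (e^{−1}·b_k) ). -/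

import Mathlib

open MeasureTheory Filter Topology

section LbfAux

open Real Finset Asymptotics



lemma mul_log_mono {x y : ℝ} (hx : 1 ≤ x) (hxy : x ≤ y) :
    x * Real.log x ≤ y * Real.log y := by
  have h1 : (0:ℝ) < x := by linarith
  exact mul_le_mul hxy (Real.log_le_log h1 hxy) (Real.log_nonneg hx) (by linarith)

lemma log_factorial_lower : ∀ n : ℕ, 1 ≤ n → (n:ℝ) * Real.log n - n ≤ Real.log (n.factorial : ℝ) := by
  intro n hn
  induction n with
  | zero => simp at hn
  | succ k ih =>
    rcases Nat.eq_or_lt_of_le hn with h | h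
    · simp [← h]
    · have hk : 1 ≤ k := Nat.lt_succ_iff.mp h
      have hk0 : (0:ℝ) < k := by exact_mod_cast hk
      have hstep : (k:ℝ) * (Real.log (k+1) - Real.log k) ≤ 1 := by
        have : Real.log ((k+1)/k) ≤ (k+1)/k - 1 := Real.log_le_sub_one_of_pos (by positivity)
        rw [Real.log_div (by positivity) (ne_of_gt hk0)] at this
        have h2 : ((k:ℝ)+1)/k - 1 = 1/k := by field_simp; ring
        have h5 : Real.log ((k:ℝ)+1) - Real.log k ≤ 1/k := by linarith
        calc (k:ℝ) * (Real.log ((k:ℝ)+1) - Real.log k) ≤ (k:ℝ) * (1/k) :=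
              mul_le_mul_of_nonneg_left h5 hk0.le
          _ = 1 := by field_simp
      have hfact : Real.log ((k+1).factorial : ℝ) = Real.log (k+1) + Real.log (k.factorial : ℝ) := by
        rw [Nat.factorial_succ]
        push_cast
        rw [Real.log_mul (by positivity) (by exact_mod_cast Nat.factorial_pos k |>.ne')]
      have hih := ih hk
      push_cast
      rw [hfact]
      push_cast at hih ⊢
      nlinarith [hih, hstep]

lemma log_factorial_upper : ∀ n : ℕ, 1 ≤ n →
    Real.log (n.factorial : ℝ) ≤ (n:ℝ) * Real.log n - n + Real.log n + 1 := by
  intro n hn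
  induction n with
  | zero => simp at hn
  | succ k ih =>
    rcases Nat.eq_or_lt_of_le hn with h | h
    · simp [← h]
    · have hk : 1 ≤ k := Nat.lt_succ_iff.mp h
      have hk0 : (0:ℝ) < k := by exact_mod_cast hk
      have hstep : 1 ≤ ((k:ℝ)+1) * (Real.log (k+1) - Real.log k) := by
        have h1 : (k:ℝ)/(k+1) ≤ Real.exp (-(1/((k:ℝ)+1))) := by
          have := Real.add_one_le_exp (-(1/((k:ℝ)+1)))
          have h2 : -(1/((k:ℝ)+1)) + 1 = k/(k+1) := by field_simp; ring
          linarith [this, h2.symm.le]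
        have h3 : Real.log ((k:ℝ)/(k+1)) ≤ -(1/((k:ℝ)+1)) := by
          calc Real.log ((k:ℝ)/(k+1)) ≤ Real.log (Real.exp (-(1/((k:ℝ)+1)))) :=
                Real.log_le_log (by positivity) h1
            _ = -(1/((k:ℝ)+1)) := Real.log_exp _
        rw [Real.log_div (ne_of_gt hk0) (by positivity)] at h3
        have h4 : 1/((k:ℝ)+1) ≤ Real.log (k+1) - Real.log k := by linarith
        calc (1:ℝ) = ((k:ℝ)+1) * (1/((k:ℝ)+1)) := by field_simp
          _ ≤ ((k:ℝ)+1) * (Real.log (k+1) - Real.log k) := by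
              apply mul_le_mul_of_nonneg_left h4 (by positivity)
      have hfact : Real.log ((k+1).factorial : ℝ) = Real.log (k+1) + Real.log (k.factorial : ℝ) := by
        rw [Nat.factorial_succ]
        push_cast
        rw [Real.log_mul (by positivity) (by exact_mod_cast Nat.factorial_pos k |>.ne')]
      have hih := ih hk
      push_cast
      rw [hfact]
      push_cast at hih ⊢
      nlinarith [hih, hstep]




lemma gamma_log_bounds {t : ℝ} (ht : 2 ≤ t) :
    (t-1)*Real.log (t-1) - t ≤ Real.log (Real.Gamma (1+t)) ∧
      Real.log (Real.Gamma (1+t)) ≤ (t+1)*Real.log (t+1) - t + Real.log (t+1) + 1 := by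
  set n := ⌊t⌋₊ with hn
  have ht0 : (0:ℝ) ≤ t := by linarith
  have hnt : (n:ℝ) ≤ t := Nat.floor_le ht0
  have htn : t < n + 1 := Nat.lt_floor_add_one t
  have hn2 : 2 ≤ n := Nat.le_floor (by exact_mod_cast ht)
  have hn2' : (2:ℝ) ≤ n := by exact_mod_cast hn2
  have hmono := Real.Gamma_strictMonoOn_Ici.monotoneOn
  have h1 : Real.Gamma ((n:ℝ) + 1) ≤ Real.Gamma (1 + t) := by
    have := hmono (by simp [Set.mem_Ici]; linarith) (by simp [Set.mem_Ici]; linarith)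
      (by linarith : (n:ℝ) + 1 ≤ 1 + t)
    exact this
  have h2 : Real.Gamma (1 + t) ≤ Real.Gamma ((n:ℝ) + 1 + 1) := by
    have := hmono (by simp [Set.mem_Ici]; linarith) (by simp [Set.mem_Ici]; linarith)
      (by linarith : 1 + t ≤ (n:ℝ) + 1 + 1)
    exact this
  have hfn : Real.Gamma ((n:ℝ) + 1) = (n.factorial : ℝ) := by
    exact_mod_cast Real.Gamma_nat_eq_factorial n
  have hfn1 : Real.Gamma ((n:ℝ) + 1 + 1) = ((n+1).factorial : ℝ) := by
    have := Real.Gamma_nat_eq_factorial (n+1)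
    push_cast at this ⊢
    linarith [this]
  have hfpos : (0:ℝ) < (n.factorial : ℝ) := by exact_mod_cast Nat.factorial_pos n
  have hf1pos : (0:ℝ) < ((n+1).factorial : ℝ) := by exact_mod_cast Nat.factorial_pos (n+1)
  constructor
  · have hlog : Real.log (n.factorial : ℝ) ≤ Real.log (Real.Gamma (1+t)) := by
      apply Real.log_le_log hfpos; rw [← hfn]; exact h1
    have hlf := log_factorial_lower n (by omega)
    have hml : (t-1)*Real.log (t-1) ≤ (n:ℝ)*Real.log n :=
      mul_log_mono (by linarith) (by linarith)
    linarith
  · have hlog : Real.log (Real.Gamma (1+t)) ≤ Real.log ((n+1).factorial : ℝ) := by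
      apply Real.log_le_log
      · exact Real.Gamma_pos_of_pos (by linarith)
      · rw [← hfn1]; exact h2
    have huf := log_factorial_upper (n+1) (by omega)
    push_cast at huf
    have hml : ((n:ℝ)+1)*Real.log ((n:ℝ)+1) ≤ (t+1)*Real.log (t+1) :=
      mul_log_mono (by linarith) (by linarith)
    have hlg : Real.log ((n:ℝ)+1) ≤ Real.log (t+1) :=
      Real.log_le_log (by linarith) (by linarith)
    linarith

lemma log_div_self_comp (c : ℝ) :
    Tendsto (fun t : ℝ => Real.log (t + c) / (t + c)) atTop (𝓝 0) :=
  (Real.isLittleO_log_id_atTop.tendsto_div_nhds_zero).comp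
    (tendsto_atTop_add_const_right atTop c tendsto_id)

lemma ratio_tendsto (c : ℝ) : Tendsto (fun t : ℝ => (t + c) / t) atTop (𝓝 1) := by
  have h : Tendsto (fun t : ℝ => 1 + c * t⁻¹) atTop (𝓝 (1 + c * 0)) :=
    tendsto_const_nhds.add (tendsto_const_nhds.mul tendsto_inv_atTop_zero)
  simp only [mul_zero, add_zero] at h
  apply h.congr'
  filter_upwards [eventually_gt_atTop (0:ℝ)] with t ht
  field_simp

lemma log_shift_div_tendsto (c : ℝ) :
    Tendsto (fun t : ℝ => Real.log (t + c) / t) atTop (𝓝 0) := by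
  have h := (log_div_self_comp c).mul (ratio_tendsto c)
  simp only [zero_mul] at h
  apply h.congr'
  filter_upwards [eventually_gt_atTop (max 1 (1 - c))] with t ht
  have ht1 : (0:ℝ) < t := lt_of_le_of_lt (by simp) ht
  have htc : (0:ℝ) < t + c := by
    have := lt_of_le_of_lt (le_max_right 1 (1-c)) ht; linarith
  field_simp

lemma log_ratio_tendsto (c : ℝ) :
    Tendsto (fun t : ℝ => Real.log ((t + c) / t)) atTop (𝓝 0) := by
  have := ((Real.continuousAt_log one_ne_zero).tendsto).comp (ratio_tendsto c)
  simpa [Function.comp_def] using this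

lemma key_tendsto :
    Tendsto (fun t : ℝ => Real.log (Real.Gamma (1+t)) / t - Real.log t) atTop (𝓝 (-1)) := by
  have hL : Tendsto (fun t : ℝ => ((t-1)*Real.log (t-1) - t)/t - Real.log t) atTop (𝓝 (-1)) := by
    have h := ((log_ratio_tendsto (-1)).sub (log_shift_div_tendsto (-1))).sub_const 1
    simp only [zero_sub, sub_zero] at h
    apply h.congr'
    filter_upwards [eventually_ge_atTop (2:ℝ)] with t ht
    have h1 : (0:ℝ) < t - 1 := by linarith
    have h2 : (0:ℝ) < t := by linarith
    rw [Real.log_div (by linarith) (by linarith)]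
    have : t + -1 = t - 1 := by ring
    rw [this]
    field_simp
    ring
  have hU : Tendsto (fun t : ℝ => ((t+1)*Real.log (t+1) - t + Real.log (t+1) + 1)/t - Real.log t)
      atTop (𝓝 (-1)) := by
    have h := (((log_ratio_tendsto 1).add ((log_shift_div_tendsto 1).const_mul 2)).add
      (show Tendsto (fun t : ℝ => 1/t) atTop (𝓝 0) by
        simpa using (tendsto_inv_atTop_zero : Tendsto (fun t : ℝ => t⁻¹) atTop (𝓝 0)))).sub_const 1
    norm_num at h
    apply h.congr'
    filter_upwards [eventually_ge_atTop (2:ℝ)] with t ht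
    have h1 : (0:ℝ) < t + 1 := by linarith
    have h2 : (0:ℝ) < t := by linarith
    rw [Real.log_div (by linarith) (by linarith)]
    field_simp
    ring
  apply tendsto_of_tendsto_of_tendsto_of_le_of_le' hL hU
  · filter_upwards [eventually_ge_atTop (2:ℝ)] with t ht
    have h := (gamma_log_bounds ht).1
    have h2 : (0:ℝ) < t := by linarith
    gcongr
  · filter_upwards [eventually_ge_atTop (2:ℝ)] with t ht
    have h := (gamma_log_bounds ht).2
    have h2 : (0:ℝ) < t := by linarith
    gcongr




lemma per_k {B d : ℝ} (hB : 0 < B) (hd : 0 < d) :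
    Tendsto (fun p : ℕ => Real.log (Real.Gamma (1 + (p:ℝ)*B))/p - B * Real.log ((p:ℝ)*d)) atTop
      (𝓝 (-(B * Real.log (d/(Real.exp (-1)*B))))) := by
  have hcomp : Tendsto (fun p : ℕ => (p:ℝ)*B) atTop atTop :=
    Tendsto.atTop_mul_const hB tendsto_natCast_atTop_atTop
  have h := ((key_tendsto.comp hcomp).const_mul B).add_const (B*Real.log B - B*Real.log d)
  have hval : B * (-1) + (B*Real.log B - B*Real.log d) = -(B * Real.log (d/(Real.exp (-1)*B))) := by
    rw [Real.log_div hd.ne' (by positivity), Real.log_mul (Real.exp_pos _).ne' hB.ne',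
      Real.log_exp]
    ring
  rw [hval] at h
  apply h.congr'
  filter_upwards [eventually_ge_atTop 1] with p hp
  have hp0 : (0:ℝ) < p := by exact_mod_cast hp
  simp only [Function.comp]
  rw [Real.log_mul hp0.ne' hB.ne', Real.log_mul hp0.ne' hd.ne']
  field_simp
  ring




lemma indicator_pi_prod {n : ℕ} (s : Set ℝ) (f : Fin n → ℝ → ℝ) (x : Fin n → ℝ) :
    (Set.univ.pi fun _ : Fin n => s).indicator (fun x : Fin n → ℝ => ∏ k, f k (x k)) x
      = ∏ k, (s.indicator (f k)) (x k) := by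
  by_cases h : x ∈ Set.univ.pi fun _ : Fin n => s
  · rw [Set.indicator_of_mem h]
    refine Finset.prod_congr rfl fun k _ => ?_
    rw [Set.indicator_of_mem (h k (Set.mem_univ k))]
  · rw [Set.indicator_of_notMem h]
    obtain ⟨k, hk⟩ : ∃ k, x k ∉ s := by simpa [Set.mem_pi] using h
    exact (Finset.prod_eq_zero (Finset.mem_univ k) (Set.indicator_of_notMem hk _)).symm

lemma one_dim {P B d : ℝ} (hP : 0 < P) (hB : 0 < B) (hd : 0 < d) :
    ∫ u : ℝ, (Set.Ici (0:ℝ)).indicator (fun u => Real.exp (P * (B * Real.log u - d * u))) u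
      = (1/(P*d)) ^ (P*B + 1) * Real.Gamma (P*B + 1) := by
  rw [MeasureTheory.integral_indicator measurableSet_Ici,
    MeasureTheory.integral_Ici_eq_integral_Ioi]
  have heq : ∀ u ∈ Set.Ioi (0:ℝ),
      Real.exp (P * (B * Real.log u - d * u)) = u ^ (P*B + 1 - 1) * Real.exp (-(P*d*u)) := by
    intro u hu
    have hu0 : (0:ℝ) < u := hu
    rw [show P*B + 1 - 1 = P*B by ring, Real.rpow_def_of_pos hu0, ← Real.exp_add]
    congr 1
    ring
  rw [MeasureTheory.setIntegral_congr_fun measurableSet_Ioi heq,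
    Real.integral_rpow_mul_exp_neg_mul_Ioi (by positivity) (by positivity)]

lemma algebra_id (n m : ℕ) {P : ℝ} (hP : 0 < P) (G D B : Fin n → ℝ) (L : Fin m → ℝ) (lp : ℝ) :
    (1/P) * (∑ k, (G k - (P * B k + 1) * (lp + D k))) - ∑ j, (lp + L j)/P
      = (∑ k, (G k / P - B k * (lp + D k))) - (∑ k, D k / P) - (∑ j, L j / P)
        - (((m:ℝ) + n)/P) * lp := by
  have e1 : ∀ k ∈ (Finset.univ : Finset (Fin n)), (1/P) * (G k - (P * B k + 1) * (lp + D k))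
      = ((G k / P - B k * (lp + D k)) - D k / P) - lp / P := by
    intro k _; field_simp; ring
  have e2 : ∀ j ∈ (Finset.univ : Finset (Fin m)), (lp + L j)/P = L j / P + lp / P := by
    intro j _; ring
  rw [Finset.mul_sum, Finset.sum_congr rfl e1, Finset.sum_congr rfl e2]
  simp only [Finset.sum_sub_distrib, Finset.sum_add_distrib, Finset.sum_const,
    Finset.card_univ, Fintype.card_fin, nsmul_eq_mul]
  field_simp
  ring



end LbfAux

/-- **Proposition 2.11 of the paper.** For the problem
`sup{⟨c,x⟩ + Σₖ bₖ ln xₖ : Ax ≤ y, x > 0}` with `b > 0`, `λ > 0` and `A'λ > c`, the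
explicitly defined function `φ_p(λ;y)` equals the `L^p`-norm approximation
`⟨λ,y⟩ + (1/p) ln ∫_{ℝⁿ₊} e^{p(⟨c,x⟩ + Σₖ bₖ ln xₖ - ⟨λ,Ax⟩)} dx - Σⱼ ln(pλⱼ)/p`
for every `p ≥ 1`, and
`lim_{p→∞} φ_p(λ;y) = ⟨λ,y⟩ - Σₖ bₖ ln( ((A'λ)ₖ - cₖ) / (e⁻¹ bₖ) )`. -/
theorem lbf_dual_example (n m : ℕ) (A : Matrix (Fin m) (Fin n) ℝ)
    (b c : Fin n → ℝ) (hb : ∀ k, 0 < b k)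
    (y : Fin m → ℝ) (l : Fin m → ℝ) (hl : ∀ j, 0 < l j)
    (hAl : ∀ k, c k < ∑ j, A j k * l j)
    (φ : ℕ → ℝ)
    (hφ : ∀ p : ℕ, φ p = (∑ j, l j * y j) +
      (∑ k, (Real.log (Real.Gamma (1 + (p : ℝ) * b k)) / p -
        b k * Real.log ((p : ℝ) * ((∑ j, A j k * l j) - c k)))) -
      (∑ k, Real.log ((∑ j, A j k * l j) - c k) / p) -
      (∑ j, Real.log (l j) / p) - (((m : ℝ) + n) / p) * Real.log p) :
    (∀ p : ℕ, 1 ≤ p → φ p = (∑ j, l j * y j) +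
        (1 / (p : ℝ)) * Real.log (∫ x in {x : Fin n → ℝ | 0 ≤ x},
          Real.exp ((p : ℝ) * ((∑ k, c k * x k) + (∑ k, b k * Real.log (x k)) -
            ∑ j, l j * A.mulVec x j))) -
        ∑ j, Real.log ((p : ℝ) * l j) / p) ∧
    Tendsto (fun p : ℕ => φ p) atTop
      (𝓝 ((∑ j, l j * y j) -
        ∑ k, b k * Real.log (((∑ j, A j k * l j) - c k) / (Real.exp (-1) * b k)))) := by
  constructor
  · intro p hp
    have hp0 : (0:ℝ) < p := by exact_mod_cast hp
    set d : Fin n → ℝ := fun k => (∑ j, A j k * l j) - c k with hd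
    have hdpos : ∀ k, 0 < d k := fun k => sub_pos.mpr (hAl k)
    -- rewrite exponent
    have hexp : ∀ x : Fin n → ℝ,
        (p : ℝ) * ((∑ k, c k * x k) + (∑ k, b k * Real.log (x k)) - ∑ j, l j * A.mulVec x j)
          = ∑ k, (p:ℝ) * (b k * Real.log (x k) - d k * x k) := by
      intro x
      have hswap : ∑ j, l j * A.mulVec x j = ∑ k, (∑ j, A j k * l j) * x k := by
        simp only [Matrix.mulVec, dotProduct, Finset.mul_sum]
        rw [Finset.sum_comm]
        refine Finset.sum_congr rfl fun k _ => ?_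
        rw [Finset.sum_mul]
        exact Finset.sum_congr rfl fun j _ => by ring
      rw [hswap, ← Finset.sum_add_distrib, ← Finset.sum_sub_distrib, Finset.mul_sum]
      refine Finset.sum_congr rfl fun k _ => ?_
      have hdk : d k = (∑ j, A j k * l j) - c k := rfl
      rw [hdk]
      ring
    -- compute the integral
    have hS : {x : Fin n → ℝ | 0 ≤ x} = Set.univ.pi (fun _ : Fin n => Set.Ici (0:ℝ)) := by
      ext x
      simp [Pi.le_def, Set.mem_pi]
    have hI : (∫ x in {x : Fin n → ℝ | 0 ≤ x},
          Real.exp ((p : ℝ) * ((∑ k, c k * x k) + (∑ k, b k * Real.log (x k)) -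
            ∑ j, l j * A.mulVec x j)))
        = ∏ k, ((1/((p:ℝ) * d k)) ^ ((p:ℝ) * b k + 1) * Real.Gamma ((p:ℝ) * b k + 1)) := by
      rw [hS, ← MeasureTheory.integral_indicator (MeasurableSet.univ_pi fun _ => measurableSet_Ici)]
      have hind : ∀ x : Fin n → ℝ,
          (Set.univ.pi fun _ : Fin n => Set.Ici (0:ℝ)).indicator
            (fun x : Fin n → ℝ => Real.exp ((p : ℝ) * ((∑ k, c k * x k) +
              (∑ k, b k * Real.log (x k)) - ∑ j, l j * A.mulVec x j))) x
          = ∏ k, ((Set.Ici (0:ℝ)).indicator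
              (fun u => Real.exp ((p:ℝ) * (b k * Real.log u - d k * u)))) (x k) := by
        intro x
        rw [← indicator_pi_prod]
        congr 1
        funext z
        rw [hexp z, Real.exp_sum]
      simp only [hind]
      rw [MeasureTheory.integral_fintype_prod_volume_eq_prod
        (f := fun k => (Set.Ici (0:ℝ)).indicator
          (fun u => Real.exp ((p:ℝ) * (b k * Real.log u - d k * u))))]
      exact Finset.prod_congr rfl fun k _ => one_dim hp0 (hb k) (hdpos k)
    rw [hφ p, hI]
    -- take logs
    have hlog : Real.log (∏ k, ((1/((p:ℝ) * d k)) ^ ((p:ℝ) * b k + 1) * Real.Gamma ((p:ℝ) * b k + 1)))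
        = ∑ k, (Real.log (Real.Gamma (1 + (p:ℝ) * b k))
            - ((p:ℝ) * b k + 1) * (Real.log p + Real.log (d k))) := by
      rw [Real.log_prod]
      · refine Finset.sum_congr rfl fun k _ => ?_
        have hbk := hb k
        have hdk := hdpos k
        have hpd : (0:ℝ) < (p:ℝ) * d k := by positivity
        have hgpos : 0 < Real.Gamma ((p:ℝ) * b k + 1) := Real.Gamma_pos_of_pos (by positivity)
        rw [Real.log_mul (by positivity) hgpos.ne', Real.log_rpow (by positivity),
          one_div, Real.log_inv, Real.log_mul hp0.ne' (hdpos k).ne', add_comm ((p:ℝ) * b k) 1]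
        ring
      · intro k _
        have hbk := hb k
        have hdk := hdpos k
        have hpd : (0:ℝ) < (p:ℝ) * d k := by positivity
        have hgpos : 0 < Real.Gamma ((p:ℝ) * b k + 1) := Real.Gamma_pos_of_pos (by positivity)
        positivity
    rw [hlog]
    -- split logs in the lambda sum
    have hll : ∀ j ∈ (Finset.univ : Finset (Fin m)),
        Real.log ((p:ℝ) * l j) / p = (Real.log p + Real.log (l j)) / p := by
      intro j _
      rw [Real.log_mul hp0.ne' (hl j).ne']
    have hld : ∀ k ∈ (Finset.univ : Finset (Fin n)),
        Real.log (Real.Gamma (1 + (p : ℝ) * b k)) / p - b k * Real.log ((p : ℝ) * d k)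
          = Real.log (Real.Gamma (1 + (p : ℝ) * b k)) / p
            - b k * (Real.log p + Real.log (d k)) := by
      intro k _
      rw [Real.log_mul hp0.ne' (hdpos k).ne']
    rw [Finset.sum_congr rfl hll, Finset.sum_congr rfl hld]
    have := algebra_id n m hp0
      (fun k => Real.log (Real.Gamma (1 + (p:ℝ) * b k))) (fun k => Real.log (d k)) b
      (fun j => Real.log (l j)) (Real.log p)
    linarith [this]
  · simp only [hφ]
    have h1 : Tendsto (fun p : ℕ => ∑ k, (Real.log (Real.Gamma (1 + (p : ℝ) * b k)) / p -
        b k * Real.log ((p : ℝ) * ((∑ j, A j k * l j) - c k)))) atTop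
        (𝓝 (∑ k, -(b k * Real.log (((∑ j, A j k * l j) - c k) / (Real.exp (-1) * b k))))) :=
      tendsto_finset_sum _ (fun k _ => per_k (hb k) (sub_pos.mpr (hAl k)))
    have h3 : Tendsto (fun p : ℕ => ∑ k, Real.log ((∑ j, A j k * l j) - c k) / (p:ℝ)) atTop
        (𝓝 0) := by
      have := tendsto_finset_sum (Finset.univ : Finset (Fin n)) (fun k _ =>
        tendsto_const_div_atTop_nhds_zero_nat (Real.log ((∑ j, A j k * l j) - c k)))
      simpa using this
    have h4 : Tendsto (fun p : ℕ => ∑ j, Real.log (l j) / (p:ℝ)) atTop (𝓝 0) := by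
      have := tendsto_finset_sum (Finset.univ : Finset (Fin m)) (fun j _ =>
        tendsto_const_div_atTop_nhds_zero_nat (Real.log (l j)))
      simpa using this
    have hlogp : Tendsto (fun p : ℕ => Real.log (p:ℝ) / (p:ℝ)) atTop (𝓝 0) := by
      have := (Real.isLittleO_log_id_atTop.tendsto_div_nhds_zero).comp
        tendsto_natCast_atTop_atTop
      simpa [Function.comp_def] using this
    have h5 : Tendsto (fun p : ℕ => (((m : ℝ) + n) / p) * Real.log p) atTop (𝓝 0) := by
      have h := hlogp.const_mul ((m:ℝ) + n)
      simp only [mul_zero] at h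
      apply h.congr'
      filter_upwards [eventually_ge_atTop 1] with p hp
      have hp0 : (0:ℝ) < p := by exact_mod_cast hp
      field_simp
    have := ((((tendsto_const_nhds (x := ∑ j, l j * y j) (f := atTop (α := ℕ))).add h1).sub
      h3).sub h4).sub h5
    simpa [Finset.sum_neg_distrib, sub_eq_add_neg] using this
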